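/- A BPVE survives (i.e. p_e < 1) if and only if there exist q : ℕ → [0,1] and n₀ ∈ ℕ such that q(n₀) < 1 and Φ_n(q(n+1)) ≤ q(n) for all n ≥ n₀. -/

import Mathlib

open Filter ENNReal

/-- Probability generating function `Φ_n(z) := ∑_i ρ_n(i) z^i` of the `n`-th offspring
distribution of a branching process in varying environment (BPVE). -/
noncomputable def Phi (ρ : ℕ → ℕ → ℝ) (n : ℕ) (z : ℝ) : ℝ :=
  ∑' i : ℕ, ρ n i * z ^ i

/-- The iterated generating functions `H_0(z) := z`, `H_{n+1} := H_n ∘ Φ_n`;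
`H_n(0)` is the probability of extinction by generation `n`, and the extinction
probability is `p_e = lim_n H_n(0)`. -/
noncomputable def Hseq (ρ : ℕ → ℕ → ℝ) : ℕ → ℝ → ℝ
  | 0 => fun z => z
  | n + 1 => fun z => Hseq ρ n (Phi ρ n z)

/-- First moment `m_n := ∑_i i ρ_n(i) ∈ [0,∞]` of the `n`-th offspring distribution. -/
noncomputable def mom (ρ : ℕ → ℕ → ℝ) (n : ℕ) : ℝ≥0∞ :=
  ∑' i : ℕ, (i : ℝ≥0∞) * ENNReal.ofReal (ρ n i)

/-- Second moment `m_n⁽²⁾ := ∑_i i² ρ_n(i) ∈ [0,∞]` of the `n`-th offspring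
distribution. -/
noncomputable def mom2 (ρ : ℕ → ℕ → ℝ) (n : ℕ) : ℝ≥0∞ :=
  ∑' i : ℕ, (i : ℝ≥0∞) ^ 2 * ENNReal.ofReal (ρ n i)

section Aux
variable {ρ : ℕ → ℕ → ℝ}

lemma summable_phi (hρ0 : ∀ n i, 0 ≤ ρ n i) (hρ1 : ∀ n, HasSum (ρ n) 1) (n : ℕ)
    {z : ℝ} (h0 : 0 ≤ z) (h1 : z ≤ 1) : Summable (fun i => ρ n i * z ^ i) := by
  apply Summable.of_nonneg_of_le (fun i => mul_nonneg (hρ0 n i) (pow_nonneg h0 i))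
    (fun i => ?_) (hρ1 n).summable
  calc ρ n i * z ^ i ≤ ρ n i * 1 := by
        exact mul_le_mul_of_nonneg_left (pow_le_one₀ h0 h1) (hρ0 n i)
    _ = ρ n i := mul_one _

lemma Phi_one (hρ1 : ∀ n, HasSum (ρ n) 1) (n : ℕ) : Phi ρ n 1 = 1 := by
  simp only [Phi, one_pow, mul_one]
  exact (hρ1 n).tsum_eq

lemma Phi_nonneg (hρ0 : ∀ n i, 0 ≤ ρ n i) (n : ℕ) {z : ℝ} (h0 : 0 ≤ z) :
    0 ≤ Phi ρ n z :=
  tsum_nonneg fun i => mul_nonneg (hρ0 n i) (pow_nonneg h0 i)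

lemma Phi_mono (hρ0 : ∀ n i, 0 ≤ ρ n i) (hρ1 : ∀ n, HasSum (ρ n) 1) (n : ℕ)
    {x y : ℝ} (hx : 0 ≤ x) (hxy : x ≤ y) (hy : y ≤ 1) : Phi ρ n x ≤ Phi ρ n y := by
  apply Summable.tsum_le_tsum (fun i => ?_) (summable_phi hρ0 hρ1 n hx (hxy.trans hy))
    (summable_phi hρ0 hρ1 n (hx.trans hxy) hy)
  exact mul_le_mul_of_nonneg_left (pow_le_pow_left₀ hx hxy i) (hρ0 n i)

lemma Phi_le_one (hρ0 : ∀ n i, 0 ≤ ρ n i) (hρ1 : ∀ n, HasSum (ρ n) 1) (n : ℕ)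
    {z : ℝ} (h0 : 0 ≤ z) (h1 : z ≤ 1) : Phi ρ n z ≤ 1 := by
  calc Phi ρ n z ≤ Phi ρ n 1 := Phi_mono hρ0 hρ1 n h0 h1 le_rfl
    _ = 1 := Phi_one hρ1 n

lemma exists_pos (hρ0 : ∀ n i, 0 ≤ ρ n i) (hρ1 : ∀ n, HasSum (ρ n) 1)
    (hρlt : ∀ n, ρ n 0 < 1) (n : ℕ) : ∃ j, j ≠ 0 ∧ 0 < ρ n j := by
  by_contra h
  push_neg at h
  have hz : ∀ j, j ≠ 0 → ρ n j = 0 := fun j hj => le_antisymm (h j hj) (hρ0 n j)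
  have h01 : ρ n 0 = 1 :=
    (hasSum_single (f := ρ n) 0 (fun j hj => hz j hj)).unique (hρ1 n)
  exact (hρlt n).ne h01

lemma Phi_lt_one (hρ0 : ∀ n i, 0 ≤ ρ n i) (hρ1 : ∀ n, HasSum (ρ n) 1)
    (hρlt : ∀ n, ρ n 0 < 1) (n : ℕ) {z : ℝ} (h0 : 0 ≤ z) (h1 : z < 1) :
    Phi ρ n z < 1 := by
  obtain ⟨j, hj, hjpos⟩ := exists_pos hρ0 hρ1 hρlt n
  have hlt : ρ n j * z ^ j < ρ n j := by
    nth_rewrite 2 [← mul_one (ρ n j)]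
    exact mul_lt_mul_of_pos_left (pow_lt_one₀ h0 h1 hj) hjpos
  have hle : ∀ i, ρ n i * z ^ i ≤ ρ n i := fun i => by
    calc ρ n i * z ^ i ≤ ρ n i * 1 :=
          mul_le_mul_of_nonneg_left (pow_le_one₀ h0 h1.le) (hρ0 n i)
      _ = ρ n i := mul_one _
  have := Summable.tsum_lt_tsum hle hlt (summable_phi hρ0 hρ1 n h0 h1.le) (hρ1 n).summable
  rwa [(hρ1 n).tsum_eq] at this

lemma Phi_continuousOn (hρ0 : ∀ n i, 0 ≤ ρ n i) (hρ1 : ∀ n, HasSum (ρ n) 1) (n : ℕ) :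
    ContinuousOn (Phi ρ n) (Set.Icc (0:ℝ) 1) := by
  apply continuousOn_tsum (fun i => (continuousOn_const.mul (continuousOn_pow i)))
    (hρ1 n).summable
  rintro i x ⟨hx0, hx1⟩
  show ‖ρ n i * x ^ i‖ ≤ ρ n i
  rw [Real.norm_eq_abs, abs_of_nonneg (mul_nonneg (hρ0 n i) (pow_nonneg hx0 i))]
  calc ρ n i * x ^ i ≤ ρ n i * 1 :=
        mul_le_mul_of_nonneg_left (pow_le_one₀ hx0 hx1) (hρ0 n i)
    _ = ρ n i := mul_one _

end Aux

noncomputable def iterG (ρ : ℕ → ℕ → ℝ) : ℕ → ℕ → ℝ → ℝ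
  | _, 0, z => z
  | n, k+1, z => Phi ρ n (iterG ρ (n+1) k z)

section Aux2
variable {ρ : ℕ → ℕ → ℝ}

lemma iterG_mem (hρ0 : ∀ n i, 0 ≤ ρ n i) (hρ1 : ∀ n, HasSum (ρ n) 1) :
    ∀ (k n : ℕ) {z : ℝ}, 0 ≤ z → z ≤ 1 → iterG ρ n k z ∈ Set.Icc (0:ℝ) 1 := by
  intro k
  induction k with
  | zero => intro n z h0 h1; exact ⟨h0, h1⟩
  | succ k ih =>
    intro n z h0 h1
    obtain ⟨a, b⟩ := ih (n+1) h0 h1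
    exact ⟨Phi_nonneg hρ0 n a, Phi_le_one hρ0 hρ1 n a b⟩

lemma iterG_mono_z (hρ0 : ∀ n i, 0 ≤ ρ n i) (hρ1 : ∀ n, HasSum (ρ n) 1) :
    ∀ (k n : ℕ) {x y : ℝ}, 0 ≤ x → x ≤ y → y ≤ 1 → iterG ρ n k x ≤ iterG ρ n k y := by
  intro k
  induction k with
  | zero => intro n x y _ hxy _; exact hxy
  | succ k ih =>
    intro n x y hx hxy hy
    have h1 := iterG_mem hρ0 hρ1 k (n+1) hx (hxy.trans hy)
    have h2 := iterG_mem hρ0 hρ1 k (n+1) (hx.trans hxy) hy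
    exact Phi_mono hρ0 hρ1 n h1.1 (ih (n+1) hx hxy hy) h2.2

lemma iterG_succ_right : ∀ (k n : ℕ) (z : ℝ),
    iterG ρ n (k+1) z = iterG ρ n k (Phi ρ (n+k) z) := by
  intro k
  induction k with
  | zero => intro n z; simp [iterG]
  | succ k ih =>
    intro n z
    show Phi ρ n (iterG ρ (n+1) (k+1) z) = Phi ρ n (iterG ρ (n+1) k (Phi ρ (n+(k+1)) z))
    rw [ih (n+1) z]
    ring_nf

lemma Hseq_eq_iterG : ∀ (k : ℕ) (z : ℝ), Hseq ρ k z = iterG ρ 0 k z := by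
  intro k
  induction k with
  | zero => intro z; rfl
  | succ k ih =>
    intro z
    show Hseq ρ k (Phi ρ k z) = _
    rw [ih (Phi ρ k z), iterG_succ_right k 0 z, Nat.zero_add]

lemma iterG_add : ∀ (a b n : ℕ) (z : ℝ),
    iterG ρ n (a+b) z = iterG ρ n a (iterG ρ (n+a) b z) := by
  intro a
  induction a with
  | zero => intro b n z; simp [iterG]
  | succ a ih =>
    intro b n z
    have hab : a + 1 + b = (a + b) + 1 := by omega
    rw [hab]
    show Phi ρ n (iterG ρ (n+1) (a+b) z) = Phi ρ n (iterG ρ (n+1) a (iterG ρ (n+(a+1)) b z))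
    rw [ih b (n+1) z]
    ring_nf

lemma iterG_mono_k (hρ0 : ∀ n i, 0 ≤ ρ n i) (hρ1 : ∀ n, HasSum (ρ n) 1) :
    ∀ (k n : ℕ), iterG ρ n k 0 ≤ iterG ρ n (k+1) 0 := by
  intro k
  induction k with
  | zero => intro n; exact Phi_nonneg hρ0 n le_rfl
  | succ k ih =>
    intro n
    have h1 := iterG_mem hρ0 hρ1 k (n+1) (le_refl (0:ℝ)) zero_le_one
    have h2 := iterG_mem hρ0 hρ1 (k+1) (n+1) (le_refl (0:ℝ)) zero_le_one
    exact Phi_mono hρ0 hρ1 n h1.1 (ih (n+1)) h2.2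

lemma iterG_lt_one (hρ0 : ∀ n i, 0 ≤ ρ n i) (hρ1 : ∀ n, HasSum (ρ n) 1)
    (hρlt : ∀ n, ρ n 0 < 1) :
    ∀ (k n : ℕ) {z : ℝ}, 0 ≤ z → z < 1 → iterG ρ n k z < 1 := by
  intro k
  induction k with
  | zero => intro n z _ h1; exact h1
  | succ k ih =>
    intro n z h0 h1
    have hm := iterG_mem hρ0 hρ1 k (n+1) h0 h1.le
    exact Phi_lt_one hρ0 hρ1 hρlt n hm.1 (ih (n+1) h0 h1)

end Aux2


/-- a BPVE survives (`p_e < 1`) iff there exist `q : ℕ → [0,1]` and `n₀`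
with `q(n₀) < 1` and `Φ_n(q(n+1)) ≤ q(n)` for all `n ≥ n₀`. -/
theorem bpve_survival_iff_subinvariant (ρ : ℕ → ℕ → ℝ)
    (hρ0 : ∀ n i, 0 ≤ ρ n i) (hρ1 : ∀ n, HasSum (ρ n) 1)
    (hρlt : ∀ n, ρ n 0 < 1)
    (pe : ℝ) (hpe : Tendsto (fun n => Hseq ρ n 0) atTop (nhds pe)) :
    pe < 1 ↔
      ∃ q : ℕ → ℝ, ∃ n₀ : ℕ, (∀ n, q n ∈ Set.Icc (0 : ℝ) 1) ∧ q n₀ < 1 ∧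
        ∀ n ≥ n₀, Phi ρ n (q (n + 1)) ≤ q n := by
  constructor
  · intro hlt
    set q : ℕ → ℝ := fun n => ⨆ k, iterG ρ n k 0 with hq
    have hbdd : ∀ n, BddAbove (Set.range fun k => iterG ρ n k 0) := by
      intro n
      refine ⟨1, ?_⟩
      rintro x ⟨k, rfl⟩
      exact (iterG_mem hρ0 hρ1 k n le_rfl zero_le_one).2
    have hmono : ∀ n, Monotone (fun k => iterG ρ n k 0) :=
      fun n => monotone_nat_of_le_succ (fun k => iterG_mono_k hρ0 hρ1 k n)
    have htend : ∀ n, Tendsto (fun k => iterG ρ n k 0) atTop (nhds (q n)) :=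
      fun n => tendsto_atTop_ciSup (hmono n) (hbdd n)
    have hqmem : ∀ n, q n ∈ Set.Icc (0:ℝ) 1 := by
      intro n
      constructor
      · have := le_ciSup (hbdd n) 0
        simpa [iterG] using this
      · exact ciSup_le fun k => (iterG_mem hρ0 hρ1 k n le_rfl zero_le_one).2
    have hpe' : Tendsto (fun k => iterG ρ 0 k 0) atTop (nhds pe) := by
      simpa only [Hseq_eq_iterG] using hpe
    have hq0 : q 0 = pe := tendsto_nhds_unique (htend 0) hpe'
    refine ⟨q, 0, hqmem, by rwa [hq0], fun n _ => ?_⟩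
    have hc : Tendsto (fun k => Phi ρ n (iterG ρ (n+1) k 0)) atTop
        (nhds (Phi ρ n (q (n+1)))) := by
      apply Filter.Tendsto.comp
        ((Phi_continuousOn hρ0 hρ1 n).continuousWithinAt (hqmem (n+1)))
      apply tendsto_nhdsWithin_of_tendsto_nhds_of_eventually_within _ (htend (n+1))
      exact Eventually.of_forall (fun k => iterG_mem hρ0 hρ1 k (n+1) le_rfl zero_le_one)
    have hc2 : Tendsto (fun k => iterG ρ n (k+1) 0) atTop (nhds (q n)) :=
      (htend n).comp (tendsto_add_atTop_nat 1)
    have heq : (fun k => Phi ρ n (iterG ρ (n+1) k 0)) = fun k => iterG ρ n (k+1) 0 := rfl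
    rw [heq] at hc
    exact (tendsto_nhds_unique hc hc2).le
  · rintro ⟨q, n₀, hqmem, hqlt, hsub⟩
    have key : ∀ k n, n₀ ≤ n → iterG ρ n k 0 ≤ q n := by
      intro k
      induction k with
      | zero => intro n _; exact (hqmem n).1
      | succ k ih =>
        intro n hn
        have h1 := iterG_mem hρ0 hρ1 k (n+1) (le_refl (0:ℝ)) zero_le_one
        calc iterG ρ n (k+1) 0 = Phi ρ n (iterG ρ (n+1) k 0) := rfl
          _ ≤ Phi ρ n (q (n+1)) :=
              Phi_mono hρ0 hρ1 n h1.1 (ih (n+1) (by omega)) (hqmem (n+1)).2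
          _ ≤ q n := hsub n hn
    have hBlt : iterG ρ 0 n₀ (q n₀) < 1 :=
      iterG_lt_one hρ0 hρ1 hρlt n₀ 0 (hqmem n₀).1 hqlt
    have hle : pe ≤ iterG ρ 0 n₀ (q n₀) := by
      apply le_of_tendsto hpe
      filter_upwards [eventually_ge_atTop n₀] with n hn
      obtain ⟨m, rfl⟩ := Nat.exists_eq_add_of_le hn
      rw [Hseq_eq_iterG, iterG_add n₀ m 0 0, Nat.zero_add]
      exact iterG_mono_z hρ0 hρ1 n₀ 0
        (iterG_mem hρ0 hρ1 m n₀ (le_refl (0:ℝ)) zero_le_one).1 (key m n₀ le_rfl) (hqmem n₀).2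
    exact lt_of_le_of_lt hle hBlt
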